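/- For a linear classifier h_θ(x) = sign(xᵀθ) under the Gaussian mixture model x | y ∼ N(yWμ, WWᵀ) with identity feature map, and ℓ₂ perturbations of size ε, the boundary risk equals Φ((ε‖θ‖₂ − θᵀWμ)/‖Wᵀθ‖₂) − Φ(−θᵀWμ/‖Wᵀθ‖₂), and hence BR(h_θ) ≤ ε‖θ‖₂/(√(2π)‖Wᵀθ‖₂). -/

import Mathlib

open MeasureTheory ProbabilityTheory Matrix

/-- Euclidean norm on ℝ^n. -/
noncomputable def l2Norm {n : ℕ} (u : Fin n → ℝ) : ℝ := Real.sqrt (∑ i, u i ^ 2)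

/-- Standard normal CDF. -/
noncomputable def stdPhi (t : ℝ) : ℝ :=
  ∫ u in Set.Iic t, Real.exp (-u ^ 2 / 2) / Real.sqrt (2 * Real.pi)

section Aux

open Real


lemma my_gauss_pdf_conv {v₁ v₂ : NNReal} (h₁ : v₁ ≠ 0) (h₂ : v₂ ≠ 0) (y : ℝ) :
    ∫ x : ℝ, gaussianPDFReal 0 v₁ x * gaussianPDFReal 0 v₂ (y - x) =
      gaussianPDFReal 0 (v₁ + v₂) y := by
  have ha : 0 < (v₁ : ℝ) := lt_of_le_of_ne v₁.coe_nonneg (by exact_mod_cast h₁.symm)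
  have hb : 0 < (v₂ : ℝ) := lt_of_le_of_ne v₂.coe_nonneg (by exact_mod_cast h₂.symm)
  set a := (v₁ : ℝ) with hadef
  set b := (v₂ : ℝ) with hbdef
  have hab : 0 < a + b := by linarith
  have hp : 0 < (a + b) / (2 * a * b) := by positivity
  set p := (a + b) / (2 * a * b) with hpdef
  set c := a * y / (a + b) with hcdef
  set K := (Real.sqrt (2 * π * a))⁻¹ * (Real.sqrt (2 * π * b))⁻¹ *
      Real.exp (-y ^ 2 / (2 * (a + b))) with hKdef
  have key : ∀ x : ℝ, gaussianPDFReal 0 v₁ x * gaussianPDFReal 0 v₂ (y - x)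
      = K * Real.exp (-p * (x - c) ^ 2) := by
    intro x
    have hexp : Real.exp (-x ^ 2 / (2 * a)) * Real.exp (-(y - x) ^ 2 / (2 * b))
        = Real.exp (-y ^ 2 / (2 * (a + b))) * Real.exp (-p * (x - c) ^ 2) := by
      rw [← Real.exp_add, ← Real.exp_add]
      congr 1
      rw [hpdef, hcdef]
      field_simp
      ring
    simp only [gaussianPDFReal, sub_zero, ← hadef, ← hbdef]
    rw [mul_mul_mul_comm, hexp, hKdef]
    ring
  rw [funext key, integral_const_mul]
  have : (∫ x : ℝ, Real.exp (-p * (x - c) ^ 2)) = Real.sqrt (π / p) := by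
    rw [show (∫ x : ℝ, Real.exp (-p * (x - c) ^ 2))
        = ∫ x : ℝ, Real.exp (-p * x ^ 2) from
      integral_sub_right_eq_self (fun x : ℝ => Real.exp (-p * x ^ 2)) c]
    exact integral_gaussian p
  rw [this]
  have hpi : π / p = 2 * π * a * b / (a + b) := by
    rw [hpdef]; field_simp
  have h2pi : (0:ℝ) < 2 * π := by positivity
  have e1 : Real.sqrt (2 * π * a) = Real.sqrt (2 * π) * Real.sqrt a := by
    rw [Real.sqrt_mul h2pi.le]
  have e2 : Real.sqrt (2 * π * b) = Real.sqrt (2 * π) * Real.sqrt b := by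
    rw [Real.sqrt_mul h2pi.le]
  have e3 : Real.sqrt (π / p) = Real.sqrt (2 * π) * Real.sqrt a * Real.sqrt b / Real.sqrt (a + b) := by
    rw [hpi, Real.sqrt_div (by positivity), Real.sqrt_mul (by positivity), Real.sqrt_mul h2pi.le]
  have hcoe : ((v₁ + v₂ : NNReal) : ℝ) = a + b := by push_cast; rfl
  simp only [gaussianPDFReal, sub_zero, hcoe, hKdef]
  rw [e1, e2, e3, Real.sqrt_mul h2pi.le]
  have s1 : 0 < Real.sqrt (2 * π) := Real.sqrt_pos.2 h2pi
  have s2 : 0 < Real.sqrt a := Real.sqrt_pos.2 ha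
  have s3 : 0 < Real.sqrt b := Real.sqrt_pos.2 hb
  have s4 : 0 < Real.sqrt (a + b) := Real.sqrt_pos.2 hab
  field_simp
lemma my_gaussianReal_conv (v₁ v₂ : NNReal) :
    ((gaussianReal 0 v₁).prod (gaussianReal 0 v₂)).map (fun q : ℝ × ℝ => q.1 + q.2)
      = gaussianReal 0 (v₁ + v₂) := by
  by_cases h₁ : v₁ = 0
  · subst h₁
    rw [gaussianReal_zero_var, Measure.dirac_prod,
      Measure.map_map measurable_add measurable_prodMk_left]
    have : ((fun q : ℝ × ℝ => q.1 + q.2) ∘ Prod.mk (0:ℝ)) = id := by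
      funext x; simp
    rw [this, Measure.map_id, zero_add]
  by_cases h₂ : v₂ = 0
  · subst h₂
    rw [gaussianReal_zero_var, Measure.prod_dirac,
      Measure.map_map measurable_add measurable_prodMk_right]
    have : ((fun q : ℝ × ℝ => q.1 + q.2) ∘ (fun x : ℝ => (x, (0:ℝ)))) = id := by
      funext x; simp
    rw [this, Measure.map_id, add_zero]
  have h12 : v₁ + v₂ ≠ 0 := by simp [h₁, h₂]
  have hpdf2 : ∀ x y : ℝ, gaussianPDFReal x v₂ y = gaussianPDFReal 0 v₂ (y - x) := by
    intro x y; simp [gaussianPDFReal]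
  ext s hs
  rw [Measure.map_apply measurable_add hs,
    Measure.prod_apply (measurable_add hs)]
  have step1 : ∀ x : ℝ, (gaussianReal 0 v₂) (Prod.mk x ⁻¹' ((fun q : ℝ × ℝ => q.1 + q.2) ⁻¹' s))
      = ∫⁻ y in s, ENNReal.ofReal (gaussianPDFReal 0 v₂ (y - x)) := by
    intro x
    have hpre : Prod.mk x ⁻¹' ((fun q : ℝ × ℝ => q.1 + q.2) ⁻¹' s) = (fun y => x + y) ⁻¹' s := rfl
    rw [hpre, ← Measure.map_apply (measurable_const_add x) hs, gaussianReal_map_const_add,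
      zero_add, gaussianReal_apply _ h₂]
    refine lintegral_congr fun y => ?_
    rw [gaussianPDF, hpdf2]
  simp_rw [step1]
  have hmeas2 : Measurable fun q : ℝ × ℝ => ENNReal.ofReal (gaussianPDFReal 0 v₂ (q.2 - q.1)) :=
    ((measurable_gaussianPDFReal 0 v₂).comp (measurable_snd.sub measurable_fst)).ennreal_ofReal
  have hmeas_inner : Measurable fun x : ℝ => ∫⁻ y in s, ENNReal.ofReal (gaussianPDFReal 0 v₂ (y - x)) :=
    Measurable.lintegral_prod_right'
      (f := fun q : ℝ × ℝ => ENNReal.ofReal (gaussianPDFReal 0 v₂ (q.2 - q.1))) hmeas2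
  rw [gaussianReal_of_var_ne_zero _ h₁,
    lintegral_withDensity_eq_lintegral_mul _ (measurable_gaussianPDF 0 v₁) hmeas_inner]
  simp only [Pi.mul_apply]
  have swap1 : ∀ x : ℝ, gaussianPDF 0 v₁ x * ∫⁻ y in s, ENNReal.ofReal (gaussianPDFReal 0 v₂ (y - x))
      = ∫⁻ y in s, gaussianPDF 0 v₁ x * ENNReal.ofReal (gaussianPDFReal 0 v₂ (y - x)) := by
    intro x
    exact (lintegral_const_mul _
      (((measurable_gaussianPDFReal 0 v₂).comp (measurable_id.sub measurable_const)).ennreal_ofReal)).symm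
  simp_rw [swap1]
  rw [lintegral_lintegral_swap]
  swap
  · exact (((measurable_gaussianPDF 0 v₁).comp measurable_fst).mul hmeas2).aemeasurable
  rw [gaussianReal_apply _ h12]
  refine lintegral_congr fun y => ?_
  have hCpos : (0:ℝ) ≤ (Real.sqrt (2 * π * (v₂:ℝ)))⁻¹ := by positivity
  have hbound : ∀ t : ℝ, gaussianPDFReal 0 v₂ t ≤ (Real.sqrt (2 * π * (v₂:ℝ)))⁻¹ := by
    intro t
    rw [gaussianPDFReal]
    nth_rewrite 2 [← mul_one ((Real.sqrt (2 * π * (v₂:ℝ)))⁻¹)]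
    refine mul_le_mul_of_nonneg_left ?_ hCpos
    rw [Real.exp_le_one_iff, neg_div]
    have : (0:ℝ) ≤ (t - 0)^2 / (2 * (v₂:ℝ)) := by positivity
    linarith
  have hint : Integrable (fun x : ℝ => gaussianPDFReal 0 v₁ x * gaussianPDFReal 0 v₂ (y - x)) := by
    refine Integrable.mono' ((integrable_gaussianPDFReal 0 v₁).const_mul
      ((Real.sqrt (2 * π * (v₂:ℝ)))⁻¹)) ?_ ?_
    · exact ((measurable_gaussianPDFReal 0 v₁).mul
        ((measurable_gaussianPDFReal 0 v₂).comp (measurable_const.sub measurable_id))).aestronglyMeasurable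
    · refine ae_of_all _ fun x => ?_
      rw [Real.norm_eq_abs, abs_of_nonneg
        (mul_nonneg (gaussianPDFReal_nonneg _ _ _) (gaussianPDFReal_nonneg _ _ _))]
      calc gaussianPDFReal 0 v₁ x * gaussianPDFReal 0 v₂ (y - x)
          ≤ gaussianPDFReal 0 v₁ x * (Real.sqrt (2 * π * (v₂:ℝ)))⁻¹ :=
            mul_le_mul_of_nonneg_left (hbound _) (gaussianPDFReal_nonneg _ _ _)
        _ = (Real.sqrt (2 * π * (v₂:ℝ)))⁻¹ * gaussianPDFReal 0 v₁ x := mul_comm _ _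
  calc ∫⁻ x, gaussianPDF 0 v₁ x * ENNReal.ofReal (gaussianPDFReal 0 v₂ (y - x))
      = ∫⁻ x, ENNReal.ofReal (gaussianPDFReal 0 v₁ x * gaussianPDFReal 0 v₂ (y - x)) := by
        refine lintegral_congr fun x => ?_
        rw [gaussianPDF, ← ENNReal.ofReal_mul (gaussianPDFReal_nonneg _ _ _)]
    _ = ENNReal.ofReal (∫ x, gaussianPDFReal 0 v₁ x * gaussianPDFReal 0 v₂ (y - x)) :=
        (ofReal_integral_eq_lintegral_ofReal hint (ae_of_all _ fun x =>
          mul_nonneg (gaussianPDFReal_nonneg _ _ _) (gaussianPDFReal_nonneg _ _ _))).symm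
    _ = ENNReal.ofReal (gaussianPDFReal 0 (v₁ + v₂) y) := by rw [my_gauss_pdf_conv h₁ h₂]
    _ = gaussianPDF 0 (v₁ + v₂) y := rfl
lemma my_measurable_dot {k : ℕ} (v : Fin k → ℝ) :
    Measurable fun z : Fin k → ℝ => v ⬝ᵥ z :=
  Finset.measurable_sum _ fun i _ => (measurable_pi_apply (X := fun _ => ℝ) i).const_mul (v i)

lemma my_pi_map_dot : ∀ (k : ℕ) (v : Fin k → ℝ),
    (Measure.pi fun _ : Fin k => gaussianReal (0:ℝ) 1).map (fun z => v ⬝ᵥ z)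
      = gaussianReal 0 ⟨∑ i, v i ^ 2, by positivity⟩ := by
  intro k
  induction k with
  | zero =>
    intro v
    have h0 : (fun z : Fin 0 → ℝ => v ⬝ᵥ z) = fun _ => (0:ℝ) := by
      funext z; simp [dotProduct]
    rw [h0, Measure.map_const]
    have : (⟨∑ i : Fin 0, v i ^ 2, by positivity⟩ : NNReal) = 0 := by
      ext; simp
    rw [this]
    simp
    exact (gaussianReal_zero_var 0).symm
  | succ n ih =>
    intro v
    have hmp := measurePreserving_piFinSuccAbove (fun _ : Fin (n+1) => gaussianReal (0:ℝ) 1) 0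
    set e := MeasurableEquiv.piFinSuccAbove (fun _ : Fin (n+1) => ℝ) 0 with he
    have hdecomp : (fun z : Fin (n+1) → ℝ => v ⬝ᵥ z)
        = (fun q : ℝ × (Fin n → ℝ) => v 0 * q.1 + (fun j => v j.succ) ⬝ᵥ q.2) ∘ e := by
      funext z
      simp only [Function.comp_apply, he, MeasurableEquiv.piFinSuccAbove,
        MeasurableEquiv.coe_mk, dotProduct]
      rw [Fin.sum_univ_succ]
      simp [Fin.insertNthEquiv, Fin.tail]
    have hg1 : Measurable fun q : ℝ × (Fin n → ℝ) => v 0 * q.1 + (fun j => v j.succ) ⬝ᵥ q.2 :=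
      (measurable_fst.const_mul _).add ((my_measurable_dot _).comp measurable_snd)
    rw [hdecomp, ← Measure.map_map hg1 e.measurable, hmp.map_eq]
    have hsplit : (fun q : ℝ × (Fin n → ℝ) => v 0 * q.1 + (fun j => v j.succ) ⬝ᵥ q.2)
        = (fun q : ℝ × ℝ => q.1 + q.2) ∘
          (Prod.map (fun a : ℝ => v 0 * a) (fun w : Fin n → ℝ => (fun j => v j.succ) ⬝ᵥ w)) := rfl
    rw [hsplit, ← Measure.map_map measurable_add
      ((measurable_const_mul _).prodMap (my_measurable_dot _)),
      ← Measure.map_prod_map _ _ (measurable_const_mul _) (my_measurable_dot _),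
      ih, gaussianReal_map_const_mul, mul_zero]
    refine (my_gaussianReal_conv _ _).trans ?_
    congr 1
    ext
    push_cast
    change v 0 ^ 2 * 1 + ∑ i : Fin n, v i.succ ^ 2 = ∑ i, v i ^ 2
    rw [Fin.sum_univ_succ]
    ring
lemma my_integrable_den : Integrable (fun u : ℝ => Real.exp (-u ^ 2 / 2) / Real.sqrt (2 * π)) := by
  have h : (fun u : ℝ => Real.exp (-u ^ 2 / 2) / Real.sqrt (2 * π))
      = fun u : ℝ => Real.exp (-(1/2) * u ^ 2) / Real.sqrt (2 * π) := by
    funext u; congr 1; ring_nf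
  rw [h]
  exact (integrable_exp_neg_mul_sq (by norm_num : (0:ℝ) < 1/2)).div_const _

lemma my_den_nonneg (u : ℝ) : 0 ≤ Real.exp (-u ^ 2 / 2) / Real.sqrt (2 * π) := by positivity

lemma my_gauss_one_Iio (a : ℝ) : (gaussianReal 0 1 (Set.Iio a)).toReal = stdPhi a := by
  rw [gaussianReal_apply_eq_integral 0 one_ne_zero, ENNReal.toReal_ofReal
    (setIntegral_nonneg measurableSet_Iio fun x _ => gaussianPDFReal_nonneg _ _ _)]
  rw [stdPhi, ← setIntegral_congr_set Iio_ae_eq_Iic]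
  refine setIntegral_congr_fun measurableSet_Iio fun x _ => ?_
  simp only [gaussianPDFReal, NNReal.coe_one, mul_one, sub_zero]
  rw [inv_mul_eq_div]

lemma my_gauss_Iio (v : NNReal) (hv : v ≠ 0) (t : ℝ) :
    (gaussianReal 0 v (Set.Iio t)).toReal = stdPhi (t / Real.sqrt v) := by
  have hvpos : 0 < (v : ℝ) := lt_of_le_of_ne v.coe_nonneg (by exact_mod_cast hv.symm)
  have hs : 0 < Real.sqrt v := Real.sqrt_pos.2 hvpos
  have hmap : (gaussianReal 0 1).map (fun x => Real.sqrt v * x) = gaussianReal 0 v := by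
    rw [gaussianReal_map_const_mul, mul_zero]
    congr 1
    ext
    push_cast
    rw [mul_one, Real.sq_sqrt v.coe_nonneg]
  rw [← hmap, Measure.map_apply (measurable_const_mul _) measurableSet_Iio]
  have hpre : (fun x : ℝ => Real.sqrt v * x) ⁻¹' Set.Iio t = Set.Iio (t / Real.sqrt v) := by
    ext x
    simp only [Set.mem_preimage, Set.mem_Iio]
    rw [mul_comm, ← lt_div_iff₀ hs]
  rw [hpre, my_gauss_one_Iio]

lemma my_gauss_Ici (v : NNReal) (hv : v ≠ 0) (t : ℝ) :
    (gaussianReal 0 v (Set.Ici t)).toReal = stdPhi (-t / Real.sqrt v) := by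
  have hmap : (gaussianReal 0 v).map (fun x => (-1 : ℝ) * x) = gaussianReal 0 v := by
    rw [gaussianReal_map_const_mul, mul_zero]
    congr 1
    ext
    push_cast
    ring
  have h1 : gaussianReal 0 v (Set.Ici t)
      = gaussianReal 0 v ((fun x : ℝ => (-1 : ℝ) * x) ⁻¹' Set.Ici t) := by
    conv_lhs => rw [← hmap]
    rw [Measure.map_apply (measurable_const_mul _) measurableSet_Ici]
  have hpre : (fun x : ℝ => (-1 : ℝ) * x) ⁻¹' Set.Ici t = Set.Iic (-t) := by
    ext x
    simp only [Set.mem_preimage, Set.mem_Ici, Set.mem_Iic]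
    constructor <;> intro h <;> linarith
  have hsing : gaussianReal 0 v {(-t)} = 0 :=
    gaussianReal_absolutelyContinuous 0 hv (volume_singleton)
  have h2 : gaussianReal 0 v (Set.Iic (-t)) = gaussianReal 0 v (Set.Iio (-t)) := by
    refine le_antisymm ?_ (measure_mono Set.Iio_subset_Iic_self)
    calc gaussianReal 0 v (Set.Iic (-t)) = gaussianReal 0 v (Set.Iio (-t) ∪ {-t}) := by
          rw [Set.Iio_union_right]
      _ ≤ gaussianReal 0 v (Set.Iio (-t)) + gaussianReal 0 v {-t} := measure_union_le _ _
      _ = gaussianReal 0 v (Set.Iio (-t)) := by rw [hsing, add_zero]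
  rw [h1, hpre, h2, my_gauss_Iio v hv]

lemma my_stdPhi_mono {a b : ℝ} (hab : a ≤ b) : stdPhi a ≤ stdPhi b := by
  refine setIntegral_mono_set my_integrable_den.integrableOn
    (ae_of_all _ fun u => my_den_nonneg u) (HasSubset.Subset.eventuallyLE (Set.Iic_subset_Iic.2 hab))

lemma my_stdPhi_lip {a b : ℝ} (hab : a ≤ b) :
    stdPhi b - stdPhi a ≤ (b - a) / Real.sqrt (2 * π) := by
  have hsub : stdPhi b - stdPhi a
      = ∫ u in Set.Ioc a b, Real.exp (-u ^ 2 / 2) / Real.sqrt (2 * π) := by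
    rw [stdPhi, stdPhi, intervalIntegral.integral_Iic_sub_Iic my_integrable_den.integrableOn
      my_integrable_den.integrableOn, intervalIntegral.integral_of_le hab]
  rw [hsub]
  have hle : ∫ u in Set.Ioc a b, Real.exp (-u ^ 2 / 2) / Real.sqrt (2 * π)
      ≤ ∫ _ in Set.Ioc a b, (Real.sqrt (2 * π))⁻¹ := by
    refine setIntegral_mono_on my_integrable_den.integrableOn
      (integrableOn_const measure_Ioc_lt_top.ne) measurableSet_Ioc fun u _ => ?_
    rw [div_le_iff₀ (by positivity), inv_mul_cancel₀ (by positivity)]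
    rw [Real.exp_le_one_iff, neg_div]
    have : (0:ℝ) ≤ u ^ 2 / 2 := by positivity
    linarith
  refine hle.trans ?_
  rw [setIntegral_const, Real.volume_real_Ioc_of_le hab, smul_eq_mul,
    div_eq_mul_inv]

lemma my_l2Norm_nonneg {n : ℕ} (u : Fin n → ℝ) : 0 ≤ l2Norm u := Real.sqrt_nonneg _

lemma my_l2Norm_neg_sub {n : ℕ} (u w : Fin n → ℝ) : l2Norm (u - w) = l2Norm (w - u) := by
  unfold l2Norm
  congr 1
  refine Finset.sum_congr rfl fun i _ => ?_
  simp only [Pi.sub_apply]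
  ring

lemma my_l2Norm_smul {n : ℕ} (c : ℝ) (u : Fin n → ℝ) : l2Norm (c • u) = |c| * l2Norm u := by
  unfold l2Norm
  have h : ∀ i, (c • u) i ^ 2 = c ^ 2 * u i ^ 2 := by
    intro i; simp only [Pi.smul_apply, smul_eq_mul]; ring
  rw [Finset.sum_congr rfl fun i _ => h i, ← Finset.mul_sum, Real.sqrt_mul (sq_nonneg _),
    Real.sqrt_sq_eq_abs]

lemma my_l2Norm_neg {n : ℕ} (u : Fin n → ℝ) : l2Norm (-u) = l2Norm u := by
  unfold l2Norm
  congr 1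
  refine Finset.sum_congr rfl fun i _ => ?_
  simp only [Pi.neg_apply]
  ring

lemma my_l2Norm_pos {n : ℕ} {u : Fin n → ℝ} (hu : u ≠ 0) : 0 < l2Norm u := by
  unfold l2Norm
  refine Real.sqrt_pos.2 ?_
  obtain ⟨i, hi⟩ := Function.ne_iff.1 hu
  refine Finset.sum_pos' (fun j _ => sq_nonneg _) ⟨i, Finset.mem_univ i, ?_⟩
  simpa using pow_ne_zero 2 hi |>.lt_of_le' (sq_nonneg _) |>.le.lt_of_ne (Ne.symm (pow_ne_zero 2 hi))

lemma my_dot_self {n : ℕ} (u : Fin n → ℝ) : u ⬝ᵥ u = l2Norm u ^ 2 := by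
  unfold l2Norm
  rw [Real.sq_sqrt (by positivity)]
  refine Finset.sum_congr rfl fun i _ => ?_
  ring

lemma my_cauchy {n : ℕ} (u w : Fin n → ℝ) : u ⬝ᵥ w ≤ l2Norm u * l2Norm w := by
  unfold l2Norm
  calc u ⬝ᵥ w ≤ |u ⬝ᵥ w| := le_abs_self _
    _ = Real.sqrt ((u ⬝ᵥ w) ^ 2) := (Real.sqrt_sq_eq_abs _).symm
    _ ≤ Real.sqrt ((∑ i, u i ^ 2) * ∑ i, w i ^ 2) :=
        Real.sqrt_le_sqrt (Finset.sum_mul_sq_le_sq_mul_sq _ _ _)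
    _ = Real.sqrt (∑ i, u i ^ 2) * Real.sqrt (∑ i, w i ^ 2) :=
        Real.sqrt_mul (by positivity) _

lemma my_exists_iff_lt {n : ℕ} {θ : Fin n → ℝ} (hθ : θ ≠ 0) {ε : ℝ} (hε : 0 ≤ ε)
    (x : Fin n → ℝ) :
    (∃ x', l2Norm (x' - x) ≤ ε ∧ x' ⬝ᵥ θ < 0) ↔ x ⬝ᵥ θ < ε * l2Norm θ := by
  have hc : 0 < l2Norm θ := my_l2Norm_pos hθ
  constructor
  · rintro ⟨x', h1, h2⟩
    have hdec : x ⬝ᵥ θ = x' ⬝ᵥ θ + (x - x') ⬝ᵥ θ := by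
      rw [sub_dotProduct]; ring
    have hcs : (x - x') ⬝ᵥ θ ≤ ε * l2Norm θ := by
      calc (x - x') ⬝ᵥ θ ≤ l2Norm (x - x') * l2Norm θ := my_cauchy _ _
        _ = l2Norm (x' - x) * l2Norm θ := by rw [my_l2Norm_neg_sub]
        _ ≤ ε * l2Norm θ := mul_le_mul_of_nonneg_right h1 hc.le
    linarith
  · intro hx
    refine ⟨x - (ε / l2Norm θ) • θ, ?_, ?_⟩
    · have : x - (ε / l2Norm θ) • θ - x = -((ε / l2Norm θ) • θ) := by abel
      rw [this]
      have hn : l2Norm (-((ε / l2Norm θ) • θ)) = (ε / l2Norm θ) * l2Norm θ := by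
        rw [my_l2Norm_neg, my_l2Norm_smul, abs_of_nonneg (by positivity)]
      rw [hn, div_mul_cancel₀ _ hc.ne']
    · rw [sub_dotProduct, smul_dotProduct, smul_eq_mul, my_dot_self]
      have : ε / l2Norm θ * l2Norm θ ^ 2 = ε * l2Norm θ := by
        field_simp
      rw [this]
      linarith

lemma my_exists_iff_ge {n : ℕ} {θ : Fin n → ℝ} (hθ : θ ≠ 0) {ε : ℝ} (hε : 0 ≤ ε)
    (x : Fin n → ℝ) :
    (∃ x', l2Norm (x' - x) ≤ ε ∧ 0 ≤ x' ⬝ᵥ θ) ↔ -(ε * l2Norm θ) ≤ x ⬝ᵥ θ := by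
  have hc : 0 < l2Norm θ := my_l2Norm_pos hθ
  constructor
  · rintro ⟨x', h1, h2⟩
    have hdec : x' ⬝ᵥ θ = x ⬝ᵥ θ + (x' - x) ⬝ᵥ θ := by
      rw [sub_dotProduct]; ring
    have hcs : (x' - x) ⬝ᵥ θ ≤ ε * l2Norm θ := by
      calc (x' - x) ⬝ᵥ θ ≤ l2Norm (x' - x) * l2Norm θ := my_cauchy _ _
        _ ≤ ε * l2Norm θ := mul_le_mul_of_nonneg_right h1 hc.le
    linarith
  · intro hx
    refine ⟨x + (ε / l2Norm θ) • θ, ?_, ?_⟩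
    · have : x + (ε / l2Norm θ) • θ - x = (ε / l2Norm θ) • θ := by abel
      rw [this]
      have hn : l2Norm ((ε / l2Norm θ) • θ) = (ε / l2Norm θ) * l2Norm θ := by
        rw [my_l2Norm_smul, abs_of_nonneg (by positivity)]
      rw [hn, div_mul_cancel₀ _ hc.ne']
    · rw [add_dotProduct, smul_dotProduct, smul_eq_mul, my_dot_self]
      have : ε / l2Norm θ * l2Norm θ ^ 2 = ε * l2Norm θ := by
        field_simp
      linarith [this]

end Aux

/-- For the linear classifier `h_θ(x) = sign(xᵀθ)` under the balanced Gaussian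
mixture `x | y ∼ N(yWμ, WWᵀ)` with ℓ₂ perturbations of size `ε`, the boundary
risk equals `Φ((ε‖θ‖ - θᵀWμ)/‖Wᵀθ‖) - Φ(-θᵀWμ/‖Wᵀθ‖)` and is at most
`ε‖θ‖/(√(2π)‖Wᵀθ‖)`. -/
theorem linear_classifier_boundary_risk {d k : ℕ} (W : Matrix (Fin d) (Fin k) ℝ)
    (μ : Fin k → ℝ) (θ : Fin d → ℝ) (hθ : Wᵀ.mulVec θ ≠ 0)
    (ε : ℝ) (hε : 0 ≤ ε)
    (P : Measure ((Fin d → ℝ) × ℝ))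
    (hP : P = (2:ENNReal)⁻¹ •
        ((Measure.pi fun _ : Fin k => gaussianReal 0 1).map
          (fun z => (W.mulVec (μ + z), (1:ℝ)))) +
      (2:ENNReal)⁻¹ •
        ((Measure.pi fun _ : Fin k => gaussianReal 0 1).map
          (fun z => (W.mulVec (-μ + z), (-1:ℝ)))))
    (h : (Fin d → ℝ) → ℝ) (hh : h = fun x => if 0 ≤ x ⬝ᵥ θ then 1 else -1) :
    (P {p | ∃ x', l2Norm (x' - p.1) ≤ ε ∧ h x' * p.2 ≤ 0}).toReal -
        (P {p | h p.1 * p.2 ≤ 0}).toReal =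
      stdPhi ((ε * l2Norm θ - θ ⬝ᵥ W.mulVec μ) / l2Norm (Wᵀ.mulVec θ)) -
        stdPhi (-(θ ⬝ᵥ W.mulVec μ) / l2Norm (Wᵀ.mulVec θ)) ∧
    (P {p | ∃ x', l2Norm (x' - p.1) ≤ ε ∧ h x' * p.2 ≤ 0}).toReal -
        (P {p | h p.1 * p.2 ≤ 0}).toReal ≤
      ε * l2Norm θ / (Real.sqrt (2 * Real.pi) * l2Norm (Wᵀ.mulVec θ)) := by
  classical
  have hθ0 : θ ≠ 0 := by
    rintro rfl
    exact hθ (by simp)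
  -- notation
  set v : Fin k → ℝ := Wᵀ.mulVec θ with hv
  set E : ℝ := ε * l2Norm θ with hE
  set m : ℝ := θ ⬝ᵥ W.mulVec μ with hm
  have hWdot : ∀ u : Fin k → ℝ, W.mulVec u ⬝ᵥ θ = u ⬝ᵥ v := by
    intro u
    rw [dotProduct_comm, Matrix.dotProduct_mulVec, hv, Matrix.mulVec_transpose,
      dotProduct_comm]
  have hmv : m = μ ⬝ᵥ v := by rw [hm, dotProduct_comm, ← hWdot]
  have hEnn : 0 ≤ E := mul_nonneg hε (my_l2Norm_nonneg θ)
  -- the variance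
  set V : NNReal := ⟨∑ i, v i ^ 2, by positivity⟩ with hV
  have hVne : V ≠ 0 := by
    intro hzero
    apply hθ
    have hsum : (∑ i, v i ^ 2) = 0 := congrArg Subtype.val hzero
    funext i
    have := (Finset.sum_eq_zero_iff_of_nonneg (fun j _ => sq_nonneg (v j))).1 hsum i
      (Finset.mem_univ i)
    simpa [pow_eq_zero_iff] using this
  have hsqrtV : Real.sqrt (V : ℝ) = l2Norm v := rfl
  have hlv : 0 < l2Norm v := my_l2Norm_pos hθ
  -- measurability facts
  have hdotv : Measurable fun z : Fin k → ℝ => v ⬝ᵥ z := my_measurable_dot v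
  have hdotθ : Measurable fun p : (Fin d → ℝ) × ℝ => p.1 ⬝ᵥ θ := by
    have h1 : Measurable fun x : Fin d → ℝ => x ⬝ᵥ θ :=
      Finset.measurable_sum _ fun i _ => (measurable_pi_apply (X := fun _ => ℝ) i).mul_const (θ i)
    exact h1.comp measurable_fst
  have hmulvec : ∀ c : Fin k → ℝ, Measurable fun z : Fin k → ℝ => W.mulVec (c + z) := by
    intro c
    refine measurable_pi_lambda _ fun i => ?_
    show Measurable fun z : Fin k → ℝ => ∑ j, W i j * (c j + z j)
    exact Finset.measurable_sum (f := fun j (z : Fin k → ℝ) => W i j * (c j + z j))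
      Finset.univ fun j _ => ((measurable_pi_apply (X := fun _ => ℝ) j).const_add (c j)).const_mul (W i j)
  have hf1 : Measurable fun z : Fin k → ℝ => (W.mulVec (μ + z), (1:ℝ)) :=
    (hmulvec μ).prodMk measurable_const
  have hf2 : Measurable fun z : Fin k → ℝ => (W.mulVec (-μ + z), (-1:ℝ)) :=
    (hmulvec (-μ)).prodMk measurable_const
  -- measure of half-space events under the Gaussian factors
  have hpushIio : ∀ c : ℝ, ((Measure.pi fun _ : Fin k => gaussianReal 0 1)
      {z | v ⬝ᵥ z < c}).toReal = stdPhi (c / l2Norm v) := by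
    intro c
    have hset : {z : Fin k → ℝ | v ⬝ᵥ z < c} = (fun z => v ⬝ᵥ z) ⁻¹' Set.Iio c := rfl
    rw [hset, ← Measure.map_apply hdotv measurableSet_Iio, my_pi_map_dot k v, ← hV,
      ← hsqrtV, my_gauss_Iio V hVne]
  have hpushIci : ∀ c : ℝ, ((Measure.pi fun _ : Fin k => gaussianReal 0 1)
      {z | c ≤ v ⬝ᵥ z}).toReal = stdPhi (-c / l2Norm v) := by
    intro c
    have hset : {z : Fin k → ℝ | c ≤ v ⬝ᵥ z} = (fun z => v ⬝ᵥ z) ⁻¹' Set.Ici c := rfl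
    rw [hset, ← Measure.map_apply hdotv measurableSet_Ici, my_pi_map_dot k v, ← hV,
      ← hsqrtV, my_gauss_Ici V hVne]
  -- description of the two events
  have hbd_set : {p : (Fin d → ℝ) × ℝ | ∃ x', l2Norm (x' - p.1) ≤ ε ∧ h x' * p.2 ≤ 0}
      = {p : (Fin d → ℝ) × ℝ | (0 < p.2 ∧ p.1 ⬝ᵥ θ < E) ∨ (p.2 < 0 ∧ -E ≤ p.1 ⬝ᵥ θ)
          ∨ p.2 = 0} := by
    ext ⟨x, y⟩
    simp only [Set.mem_setOf_eq]
    rcases lt_trichotomy y 0 with hy | hy | hy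
    · have hcond : ∀ x' : Fin d → ℝ, (h x' * y ≤ 0 ↔ 0 ≤ x' ⬝ᵥ θ) := by
        intro x'
        rw [hh]
        beta_reduce
        by_cases h0 : 0 ≤ x' ⬝ᵥ θ
        · rw [if_pos h0, one_mul]
          exact iff_of_true (by linarith) h0
        · rw [if_neg h0, neg_one_mul]
          exact iff_of_false (by intro hcontra; linarith) h0
      simp only [hcond]
      rw [my_exists_iff_ge hθ0 hε x, hE]
      constructor
      · intro h'; exact Or.inr (Or.inl ⟨hy, h'⟩)
      · rintro (⟨h1, _⟩ | ⟨_, h2⟩ | h3)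
        · exact absurd h1 (by linarith)
        · exact h2
        · exact absurd h3 (by linarith)
    · subst hy
      constructor
      · intro _; exact Or.inr (Or.inr rfl)
      · intro _
        refine ⟨x, ?_, by rw [mul_zero]⟩
        have : x - x = 0 := by abel
        rw [this]
        have : l2Norm (0 : Fin d → ℝ) = 0 := by simp [l2Norm]
        rw [this]; exact hε
    · have hcond : ∀ x' : Fin d → ℝ, (h x' * y ≤ 0 ↔ x' ⬝ᵥ θ < 0) := by
        intro x'
        rw [hh]
        beta_reduce
        by_cases h0 : 0 ≤ x' ⬝ᵥ θ
        · rw [if_pos h0, one_mul]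
          exact iff_of_false (by intro hcontra; linarith) (not_lt.2 h0)
        · rw [if_neg h0, neg_one_mul]
          exact iff_of_true (by linarith) (not_le.1 h0)
      simp only [hcond]
      rw [my_exists_iff_lt hθ0 hε x, hE]
      constructor
      · intro h'; exact Or.inl ⟨hy, h'⟩
      · rintro (⟨_, h1⟩ | ⟨h2, _⟩ | h3)
        · exact h1
        · exact absurd h2 (by linarith)
        · exact absurd h3 (by linarith)
  have hcl_set : {p : (Fin d → ℝ) × ℝ | h p.1 * p.2 ≤ 0}
      = {p : (Fin d → ℝ) × ℝ | (0 < p.2 ∧ p.1 ⬝ᵥ θ < 0) ∨ (p.2 < 0 ∧ 0 ≤ p.1 ⬝ᵥ θ)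
          ∨ p.2 = 0} := by
    ext ⟨x, y⟩
    simp only [Set.mem_setOf_eq, hh]
    rcases lt_trichotomy y 0 with hy | hy | hy
    · by_cases h0 : 0 ≤ x ⬝ᵥ θ
      · rw [if_pos h0, one_mul]
        exact iff_of_true (by linarith) (Or.inr (Or.inl ⟨hy, h0⟩))
      · rw [if_neg h0, neg_one_mul]
        refine iff_of_false (by intro hcontra; linarith) ?_
        rintro (⟨h1, _⟩ | ⟨_, h2⟩ | h3)
        · exact absurd h1 (by linarith)
        · exact absurd h2 h0
        · exact absurd h3 (by linarith)
    · subst hy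
      simp only [mul_zero, le_refl, true_iff]
      exact Or.inr (Or.inr trivial)
    · by_cases h0 : 0 ≤ x ⬝ᵥ θ
      · rw [if_pos h0, one_mul]
        refine iff_of_false (by intro hcontra; linarith) ?_
        rintro (⟨_, h1⟩ | ⟨h2, _⟩ | h3)
        · exact absurd h0 (not_le.2 h1)
        · exact absurd h2 (by linarith)
        · exact absurd h3 (by linarith)
      · rw [if_neg h0, neg_one_mul]
        exact iff_of_true (by linarith) (Or.inl ⟨hy, not_le.1 h0⟩)
  -- measurability of the generic set shape
  have hgen : ∀ c₁ c₂ : ℝ, MeasurableSet {p : (Fin d → ℝ) × ℝ |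
      (0 < p.2 ∧ p.1 ⬝ᵥ θ < c₁) ∨ (p.2 < 0 ∧ c₂ ≤ p.1 ⬝ᵥ θ) ∨ p.2 = 0} := by
    intro c₁ c₂
    refine MeasurableSet.union ?_ (MeasurableSet.union ?_ ?_)
    · exact (measurable_snd measurableSet_Ioi).inter (hdotθ measurableSet_Iio)
    · exact (measurable_snd measurableSet_Iio).inter (hdotθ measurableSet_Ici)
    · exact measurable_snd (measurableSet_singleton 0)
  -- compute P of such a set
  have hPapply : ∀ c₁ c₂ : ℝ,
      (P {p : (Fin d → ℝ) × ℝ | (0 < p.2 ∧ p.1 ⬝ᵥ θ < c₁) ∨ (p.2 < 0 ∧ c₂ ≤ p.1 ⬝ᵥ θ)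
          ∨ p.2 = 0}).toReal
        = 2⁻¹ * stdPhi ((c₁ - m) / l2Norm v) + 2⁻¹ * stdPhi (-(c₂ + m) / l2Norm v) := by
    intro c₁ c₂
    set S := {p : (Fin d → ℝ) × ℝ | (0 < p.2 ∧ p.1 ⬝ᵥ θ < c₁) ∨ (p.2 < 0 ∧ c₂ ≤ p.1 ⬝ᵥ θ)
        ∨ p.2 = 0} with hS
    have hSm : MeasurableSet S := hgen c₁ c₂
    have hpre1 : (fun z : Fin k → ℝ => (W.mulVec (μ + z), (1:ℝ))) ⁻¹' S
        = {z : Fin k → ℝ | v ⬝ᵥ z < c₁ - m} := by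
      ext z
      simp only [hS, Set.mem_preimage, Set.mem_setOf_eq]
      have h1 : (0:ℝ) < 1 := one_pos
      have hdot : W.mulVec (μ + z) ⬝ᵥ θ = m + v ⬝ᵥ z := by
        rw [hWdot, add_dotProduct, hmv, dotProduct_comm v z]
      constructor
      · rintro (⟨_, hlt⟩ | ⟨hneg, _⟩ | hzero)
        · rw [hdot] at hlt; linarith
        · exact absurd hneg (by norm_num)
        · exact absurd hzero (by norm_num)
      · intro hlt
        exact Or.inl ⟨h1, by rw [hdot]; linarith⟩
    have hpre2 : (fun z : Fin k → ℝ => (W.mulVec (-μ + z), (-1:ℝ))) ⁻¹' S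
        = {z : Fin k → ℝ | c₂ + m ≤ v ⬝ᵥ z} := by
      ext z
      simp only [hS, Set.mem_preimage, Set.mem_setOf_eq]
      have hdot : W.mulVec (-μ + z) ⬝ᵥ θ = -m + v ⬝ᵥ z := by
        rw [hWdot, add_dotProduct, hmv, dotProduct_comm v z,
          neg_dotProduct]
      constructor
      · rintro (⟨hpos, _⟩ | ⟨_, hge⟩ | hzero)
        · exact absurd hpos (by norm_num)
        · rw [hdot] at hge; linarith
        · exact absurd hzero (by norm_num)
      · intro hge
        exact Or.inr (Or.inl ⟨by norm_num, by rw [hdot]; linarith⟩)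
    rw [hP]
    simp only [Measure.add_apply, Measure.smul_apply, smul_eq_mul]
    rw [Measure.map_apply hf1 hSm, Measure.map_apply hf2 hSm, hpre1, hpre2]
    have hfin1 : (2:ENNReal)⁻¹ * (Measure.pi fun _ : Fin k => gaussianReal 0 1)
        {z : Fin k → ℝ | v ⬝ᵥ z < c₁ - m} ≠ ⊤ :=
      ENNReal.mul_ne_top (by norm_num) (measure_ne_top _ _)
    have hfin2 : (2:ENNReal)⁻¹ * (Measure.pi fun _ : Fin k => gaussianReal 0 1)
        {z : Fin k → ℝ | c₂ + m ≤ v ⬝ᵥ z} ≠ ⊤ :=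
      ENNReal.mul_ne_top (by norm_num) (measure_ne_top _ _)
    rw [ENNReal.toReal_add hfin1 hfin2, ENNReal.toReal_mul, ENNReal.toReal_mul]
    have h2inv : ((2:ENNReal)⁻¹).toReal = (2:ℝ)⁻¹ := by
      rw [ENNReal.toReal_inv]; norm_num
    rw [h2inv, hpushIio (c₁ - m), hpushIci (c₂ + m)]
  -- final computations
  have hbd : (P {p | ∃ x', l2Norm (x' - p.1) ≤ ε ∧ h x' * p.2 ≤ 0}).toReal
      = stdPhi ((E - m) / l2Norm v) := by
    rw [hbd_set, hPapply E (-E)]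
    have : -(-E + m) = E - m := by ring
    rw [this]
    ring
  have hcl : (P {p | h p.1 * p.2 ≤ 0}).toReal = stdPhi (-m / l2Norm v) := by
    rw [hcl_set, hPapply 0 0]
    have h1 : (0 - m) = -m := by ring
    have h2 : -(0 + m) = -m := by ring
    rw [h1, h2]
    ring
  rw [hbd, hcl]
  have hBA : -m / l2Norm v ≤ (E - m) / l2Norm v := by
    rw [div_le_div_iff₀ hlv hlv]
    nlinarith
  refine ⟨rfl, ?_⟩
  have hlip := my_stdPhi_lip hBA
  refine hlip.trans (le_of_eq ?_)
  have hdiff : (E - m) / l2Norm v - -m / l2Norm v = E / l2Norm v := by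
    rw [div_sub_div_same]
    congr 1
    ring
  rw [hdiff, div_div, mul_comm (l2Norm v), hE]
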